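/- For every n ∈ ℤ, F_n(D) = D; consequently, for every n ∈ ℤ the sequence m ↦ Q_{m,n} satisfies: Q_{m,n}² = 1 for all m, Q_{m+3,n} = D·Q_{m,n}·D⁻¹ for all m, Q_{m+2,n}·Q_{m+1,n}·Q_{m,n} = D for all m, and the set {Q_{0,n}, Q_{1,n}, Q_{2,n}} generates G. -/

import Mathlib

/-- The relators of the presentation ⟨A, B, C | A² = B² = C² = 1⟩. -/
def rels : Set (FreeGroup (Fin 3)) :=
  {FreeGroup.of 0 * FreeGroup.of 0, FreeGroup.of 1 * FreeGroup.of 1,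
   FreeGroup.of 2 * FreeGroup.of 2}

/-- `G` is the group ⟨A, B, C | A² = B² = C² = 1⟩, the free product of three copies of ℤ/2. -/
abbrev G : Type := PresentedGroup rels

def A : G := PresentedGroup.of 0
def B : G := PresentedGroup.of 1
def C : G := PresentedGroup.of 2

/-- The distinguished element `D = C·B·A`. -/
def D : G := C * B * A

lemma hA2 : A * A = 1 :=
  (QuotientGroup.eq_one_iff _).mpr (Subgroup.subset_normalClosure (by left; rfl))
lemma hB2 : B * B = 1 :=
  (QuotientGroup.eq_one_iff _).mpr (Subgroup.subset_normalClosure (by right; left; rfl))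
lemma hC2 : C * C = 1 :=
  (QuotientGroup.eq_one_iff _).mpr (Subgroup.subset_normalClosure (by right; right; rfl))

lemma hAinv : A⁻¹ = A := inv_eq_of_mul_eq_one_right hA2
lemma hBinv : B⁻¹ = B := inv_eq_of_mul_eq_one_right hB2
lemma hCinv : C⁻¹ = C := inv_eq_of_mul_eq_one_right hC2

lemma htop : Subgroup.closure {A, B, C} = ⊤ := by
  rw [← top_le_iff, ← PresentedGroup.closure_range_of rels]
  apply Subgroup.closure_mono
  rintro x ⟨i, rfl⟩
  fin_cases i
  · left; rfl
  · right; left; rfl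
  · right; right; rfl

lemma hA2' (x : G) : A * (A * x) = x := by rw [← mul_assoc, hA2, one_mul]
lemma hB2' (x : G) : B * (B * x) = x := by rw [← mul_assoc, hB2, one_mul]
lemma hC2' (x : G) : C * (C * x) = x := by rw [← mul_assoc, hC2, one_mul]

lemma key1 : D * A * D⁻¹ * C * B = D := by
  simp [D, mul_inv_rev, hAinv, hBinv, hCinv, mul_assoc, hA2', hB2', hC2', hA2, hB2, hC2]

lemma key2 : D * B * A * D⁻¹ * C = D := by
  simp [D, mul_inv_rev, hAinv, hBinv, hCinv, mul_assoc, hA2', hB2', hC2', hA2, hB2, hC2]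

lemma conjsq (x y : G) (h : y * y = 1) : (x * y * x⁻¹) ^ 2 = 1 := by
  have hy' : ∀ z, y * (y * z) = z := fun z => by rw [← mul_assoc, h, one_mul]
  simp [sq, mul_assoc, hy']

/-- F_n(D) = D for all n, and the sequence m ↦ Q_{m,n} is a sequence of elliptic
generators: each Q_{m,n} squares to 1, conjugation by D shifts the index by 3,
consecutive triples multiply (in reverse) to D, and {Q_{0,n}, Q_{1,n}, Q_{2,n}}
generates G. -/
theorem stmt9
    (R L : MulAut G)
    (hRA : R A = A) (hRB : R B = B * C * B⁻¹) (hRC : R C = B)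
    (hLA : L A = B) (hLB : L B = B * A * B⁻¹) (hLC : L C = C)
    (P : ℤ → G)
    (hP0 : ∀ m : ℤ, P (3 * m) = D ^ m * A * (D ^ m)⁻¹)
    (hP1 : ∀ m : ℤ, P (3 * m + 1) = D ^ m * B * (D ^ m)⁻¹)
    (hP2 : ∀ m : ℤ, P (3 * m + 2) = D ^ m * C * (D ^ m)⁻¹)
    (p : ℤ) (hp : 2 ≤ p)
    (f : ℤ → MulAut G) (hfRL : ∀ n : ℤ, f n = R ∨ f n = L)
    (hfper : ∀ n : ℤ, f (n + p) = f n) (hf0 : f 0 = L) (hf1 : f 1 = R)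
    (F : ℤ → MulAut G) (hF0 : F 0 = 1) (hF : ∀ n : ℤ, F n = F (n - 1) * f n)
    (Q : ℤ → ℤ → G) (hQ : ∀ m n : ℤ, Q m n = F (n - 1) (P m)) :
    (∀ n : ℤ, F n D = D) ∧
    ∀ n : ℤ,
      (∀ m : ℤ, Q m n ^ 2 = 1) ∧
      (∀ m : ℤ, Q (m + 3) n = D * Q m n * D⁻¹) ∧
      (∀ m : ℤ, Q (m + 2) n * Q (m + 1) n * Q m n = D) ∧
      Subgroup.closure {Q 0 n, Q 1 n, Q 2 n} = ⊤ := by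
  have hRD : R D = D := by
    simp [D, map_mul, hRA, hRB, hRC, hBinv, hB2', mul_assoc]
  have hLD : L D = D := by
    simp [D, map_mul, hLA, hLB, hLC, hBinv, hB2', hB2, mul_assoc]
  have hfD : ∀ n : ℤ, f n D = D := by
    intro n; rcases hfRL n with h | h <;> rw [h]
    · exact hRD
    · exact hLD
  have hFD : ∀ n : ℤ, F n D = D := by
    intro n
    induction n using Int.induction_on with
    | zero => rw [hF0]; rfl
    | succ k ih =>
        have h := hF (k + 1)
        simp only [add_sub_cancel_right] at h
        rw [h, MulAut.mul_apply, hfD, ih]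
    | pred k ih =>
        have h2 : F (-(k : ℤ) - 1) = F (-k) * (f (-k))⁻¹ := by
          rw [hF (-(k : ℤ)), mul_inv_cancel_right]
        have hinv : (f (-(k : ℤ)))⁻¹ D = D := by
          conv_lhs => rw [← hfD (-(k : ℤ))]
          simp
        rw [h2, MulAut.mul_apply, hinv, ih]
  have hPsq : ∀ m : ℤ, P m ^ 2 = 1 := by
    intro m
    obtain ⟨q, r, hr, rfl⟩ : ∃ q r : ℤ, (r = 0 ∨ r = 1 ∨ r = 2) ∧ m = 3 * q + r :=
      ⟨m / 3, m % 3, by omega, by omega⟩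
    rcases hr with rfl | rfl | rfl
    · rw [show (3 * q + 0 : ℤ) = 3 * q by ring, hP0]; exact conjsq _ _ hA2
    · rw [hP1]; exact conjsq _ _ hB2
    · rw [hP2]; exact conjsq _ _ hC2
  have hPshift : ∀ m : ℤ, P (m + 3) = D * P m * D⁻¹ := by
    intro m
    obtain ⟨q, r, hr, rfl⟩ : ∃ q r : ℤ, (r = 0 ∨ r = 1 ∨ r = 2) ∧ m = 3 * q + r :=
      ⟨m / 3, m % 3, by omega, by omega⟩
    rcases hr with rfl | rfl | rfl
    · rw [show (3 * q + 0 + 3 : ℤ) = 3 * (q + 1) by ring,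
        show (3 * q + 0 : ℤ) = 3 * q by ring, hP0, hP0]; group
    · rw [show (3 * q + 1 + 3 : ℤ) = 3 * (q + 1) + 1 by ring, hP1, hP1]; group
    · rw [show (3 * q + 2 + 3 : ℤ) = 3 * (q + 1) + 2 by ring, hP2, hP2]; group
  have hPtriple : ∀ m : ℤ, P (m + 2) * P (m + 1) * P m = D := by
    intro m
    obtain ⟨q, r, hr, rfl⟩ : ∃ q r : ℤ, (r = 0 ∨ r = 1 ∨ r = 2) ∧ m = 3 * q + r :=
      ⟨m / 3, m % 3, by omega, by omega⟩
    rcases hr with rfl | rfl | rfl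
    · rw [show (3 * q + 0 + 2 : ℤ) = 3 * q + 2 by ring,
        show (3 * q + 0 + 1 : ℤ) = 3 * q + 1 by ring,
        show (3 * q + 0 : ℤ) = 3 * q by ring, hP2, hP1, hP0]
      have e : D ^ q * C * (D ^ q)⁻¹ * (D ^ q * B * (D ^ q)⁻¹) * (D ^ q * A * (D ^ q)⁻¹)
          = D ^ q * (C * B * A) * (D ^ q)⁻¹ := by group
      rw [e, show C * B * A = D from rfl]; group
    · rw [show (3 * q + 1 + 2 : ℤ) = 3 * (q + 1) by ring,
        show (3 * q + 1 + 1 : ℤ) = 3 * q + 2 by ring, hP0, hP2, hP1]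
      have e : D ^ (q + 1) * A * (D ^ (q + 1))⁻¹ * (D ^ q * C * (D ^ q)⁻¹) *
            (D ^ q * B * (D ^ q)⁻¹)
          = D ^ q * (D * A * D⁻¹ * C * B) * (D ^ q)⁻¹ := by group
      rw [e, key1]; group
    · rw [show (3 * q + 2 + 2 : ℤ) = 3 * (q + 1) + 1 by ring,
        show (3 * q + 2 + 1 : ℤ) = 3 * (q + 1) by ring, hP1, hP0, hP2]
      have e : D ^ (q + 1) * B * (D ^ (q + 1))⁻¹ * (D ^ (q + 1) * A * (D ^ (q + 1))⁻¹) *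
            (D ^ q * C * (D ^ q)⁻¹)
          = D ^ q * (D * B * A * D⁻¹ * C) * (D ^ q)⁻¹ := by group
      rw [e, key2]; group
  have hPA : P 0 = A := by simpa using hP0 0
  have hPB : P 1 = B := by simpa using hP1 0
  have hPC : P 2 = C := by simpa using hP2 0
  refine ⟨hFD, fun n => ⟨?_, ?_, ?_, ?_⟩⟩
  · intro m; rw [hQ, ← map_pow, hPsq, map_one]
  · intro m; rw [hQ, hQ, hPshift, map_mul, map_mul, map_inv, hFD]
  · intro m; rw [hQ, hQ, hQ, ← map_mul, ← map_mul, hPtriple, hFD]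
  · have himg : ({Q 0 n, Q 1 n, Q 2 n} : Set G) = ⇑(F (n - 1)) '' {A, B, C} := by
      rw [Set.image_insert_eq, Set.image_insert_eq, Set.image_singleton,
        hQ, hQ, hQ, hPA, hPB, hPC]
    rw [himg]
    have hmc := MonoidHom.map_closure (F (n - 1) : MulAut G).toMonoidHom ({A, B, C} : Set G)
    rw [MulEquiv.coe_toMonoidHom] at hmc
    rw [← hmc, htop]
    exact Subgroup.map_top_of_surjective _ (F (n - 1)).surjective
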